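/- (1) For every ultrafilter U on ℕ∖{0} there exists one and only one family (φ_p)_{p prime} of maps φ_p : ℕ∖{0} → {0,…,p−1} such that U contains the set N_{p^n,φ_p} = { p^n·m − (Σ_{k=1}^n p^{k−1}·φ_p(k)) : m ∈ ℕ∖{0} } for every prime p and every n ≥ 1. (2) Conversely, for every family (φ_p)_{p prime} of maps φ_p : ℕ∖{0} → {0,…,p−1} there exists a non-principal ultrafilter U on ℕ∖{0} containing all the sets N_{p^n,φ_p}. -/

import Mathlib

/-- The subset `N_{p^n, φ_p} = {p^n·m - (φ_p(1) + φ_p(2)p + ⋯ + φ_p(n)p^{n-1}) : m ≥ 1}`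
of the positive integers, where `s` denotes the subtracted sum. -/
def NSet (p n s : ℕ) : Set ℕ+ :=
  {x : ℕ+ | ∃ m : ℕ+, (x : ℕ) + s = p ^ n * (m : ℕ)}

/-- The characteristic sum `φ_p(1) + φ_p(2)p + ⋯ + φ_p(n)p^{n-1}`. -/
def charSum (φ : ℕ → ℕ → ℕ) (p n : ℕ) : ℕ :=
  ∑ k ∈ Finset.range n, p ^ k * φ p (k + 1)


lemma mem_NSet_iff {p n s : ℕ} {x : ℕ+} : x ∈ NSet p n s ↔ p ^ n ∣ (x : ℕ) + s := by
  constructor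
  · rintro ⟨m, hm⟩; exact ⟨m, hm⟩
  · rintro ⟨k, hk⟩
    have hx := x.pos
    have hk0 : 0 < k := by
      rcases Nat.eq_zero_or_pos k with h | h
      · subst h; simp at hk
      · exact h
    exact ⟨⟨k, hk0⟩, hk⟩

lemma charSum_succ (φ : ℕ → ℕ → ℕ) (p n : ℕ) :
    charSum φ p (n + 1) = charSum φ p n + p ^ n * φ p (n + 1) := by
  simp [charSum, Finset.sum_range_succ]

lemma charSum_lt {φ : ℕ → ℕ → ℕ} {p : ℕ} (hp : 1 ≤ p)
    (hφ : ∀ k : ℕ, 1 ≤ k → φ p k < p) (n : ℕ) : charSum φ p n < p ^ n := by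
  induction n with
  | zero => simp [charSum]
  | succ n ih =>
    have hd : φ p (n + 1) + 1 ≤ p := hφ (n + 1) (by omega)
    calc charSum φ p (n + 1) = charSum φ p n + p ^ n * φ p (n + 1) := charSum_succ φ p n
      _ < p ^ n + p ^ n * φ p (n + 1) := by omega
      _ = p ^ n * (φ p (n + 1) + 1) := by ring
      _ ≤ p ^ n * p := Nat.mul_le_mul_left _ hd
      _ = p ^ (n + 1) := by ring

lemma charSum_sub {φ : ℕ → ℕ → ℕ} {p n m : ℕ} (h : n ≤ m) :
    ∃ c, charSum φ p m = charSum φ p n + p ^ n * c := by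
  induction m with
  | zero =>
    have : n = 0 := by omega
    exact ⟨0, by simp [this]⟩
  | succ m ih =>
    rcases Nat.lt_or_ge n (m + 1) with h' | h'
    · obtain ⟨c, hc⟩ := ih (by omega)
      refine ⟨c + p ^ (m - n) * φ p (m + 1), ?_⟩
      rw [charSum_succ, hc, Nat.mul_add, ← Nat.mul_assoc, ← pow_add]
      rw [show n + (m - n) = m by omega]
      ring
    · have : n = m + 1 := by omega
      exact ⟨0, by simp [this]⟩

/-- For every modulus `M ≥ 1` an ultrafilter on `ℕ+` contains some set
`{x | M ∣ x + t}` with `t < M`. -/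
lemma exists_res (U : Ultrafilter ℕ+) {M : ℕ} (hM : 0 < M) :
    ∃ t, t < M ∧ {x : ℕ+ | M ∣ (x : ℕ) + t} ∈ U := by
  set g : ℕ+ → ℕ := fun x => (x : ℕ) % M with hg
  have hfin : (Set.Iio M).Finite := Set.finite_Iio M
  have hmem : Set.Iio M ∈ Ultrafilter.map g U := by
    rw [Ultrafilter.mem_map]
    have : g ⁻¹' Set.Iio M = Set.univ := by
      ext x; simp [hg, Nat.mod_lt _ hM]
    rw [this]; exact Filter.univ_mem
  obtain ⟨r, hr, hpure⟩ := Ultrafilter.eq_pure_of_finite_mem hfin hmem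
  have hrU : {x : ℕ+ | g x = r} ∈ U := by
    have : {r} ∈ Ultrafilter.map g U := by rw [hpure]; exact rfl
    rw [Ultrafilter.mem_map] at this
    exact this
  refine ⟨(M - r) % M, Nat.mod_lt _ hM, ?_⟩
  refine Filter.mem_of_superset hrU ?_
  intro x hx
  simp only [Set.mem_setOf_eq] at hx ⊢
  have hr' : r < M := hr
  have h1 : (x : ℕ) ≡ r [MOD M] := by
    unfold Nat.ModEq
    rw [Nat.mod_eq_of_lt hr']
    exact hx
  have h2 : (M - r) % M ≡ M - r [MOD M] := Nat.mod_modEq _ _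
  have h3 : (x : ℕ) + (M - r) % M ≡ r + (M - r) [MOD M] := h1.add h2
  rw [show r + (M - r) = M from by omega] at h3
  exact Nat.modEq_zero_iff_dvd.mp (h3.trans (Nat.modEq_zero_iff_dvd.mpr dvd_rfl))

lemma compat (U : Ultrafilter ℕ+) {p n m t1 t2 : ℕ} (hnm : n ≤ m)
    (h1 : {x : ℕ+ | p ^ n ∣ (x : ℕ) + t1} ∈ U)
    (h2 : {x : ℕ+ | p ^ m ∣ (x : ℕ) + t2} ∈ U) : t1 ≡ t2 [MOD p ^ n] := by
  obtain ⟨x, hx1, hx2⟩ := Filter.nonempty_of_mem (Filter.inter_mem h1 h2)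
  have hd : p ^ n ∣ (x : ℕ) + t2 := dvd_trans (pow_dvd_pow p hnm) hx2
  have e1 : (x : ℕ) + t1 ≡ 0 [MOD p ^ n] := Nat.modEq_zero_iff_dvd.mpr hx1
  have e2 : (x : ℕ) + t2 ≡ 0 [MOD p ^ n] := Nat.modEq_zero_iff_dvd.mpr hd
  exact Nat.ModEq.add_left_cancel' (x : ℕ) (e1.trans e2.symm)

lemma crt (S : Finset ℕ) (hS : ∀ p ∈ S, p.Prime) (j : ℕ) (r : ℕ → ℕ) :
    ∃ x : ℕ, ∀ p ∈ S, x ≡ r p [MOD p ^ j] := by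
  classical
  induction S using Finset.induction_on with
  | empty => exact ⟨0, by simp⟩
  | @insert q S hq ih =>
    obtain ⟨x, hx⟩ := ih (fun p hp => hS p (Finset.mem_insert_of_mem hp))
    have hcop : Nat.Coprime (q ^ j) (∏ p ∈ S, p ^ j) := by
      apply Nat.Coprime.prod_right
      intro p hp
      have hqp : q ≠ p := fun h => hq (h ▸ hp)
      exact Nat.Coprime.pow _ _
        (((Nat.coprime_primes (hS q (Finset.mem_insert_self q S))
          (hS p (Finset.mem_insert_of_mem hp))).mpr hqp))
    obtain ⟨y, hy1, hy2⟩ := Nat.chineseRemainder hcop (r q) x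
    refine ⟨y, ?_⟩
    intro p hp
    rcases Finset.mem_insert.mp hp with h | h
    · subst h; exact hy1
    · exact (hy2.of_dvd (Finset.dvd_prod_of_mem (fun p => p ^ j) h)).trans (hx p h)

/-- (1) Every ultrafilter on `ℕ∖{0}` contains the family of subsets `N_{p^n,φ_p}`
characteristic of exactly one family `(φ_p)_p` of maps `φ_p : ℕ∖{0} → {0,…,p-1}`.
(2) For every such family `(φ_p)_p` there is a non-principal ultrafilter on `ℕ∖{0}`
containing all the sets `N_{p^n,φ_p}`. -/
theorem ultrafilter_charSets :
    (∀ U : Ultrafilter ℕ+,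
      (∃ φ : ℕ → ℕ → ℕ, (∀ p : ℕ, p.Prime → ∀ k : ℕ, 1 ≤ k → φ p k < p) ∧
        (∀ p n : ℕ, p.Prime → 1 ≤ n → NSet p n (charSum φ p n) ∈ U)) ∧
      (∀ φ ψ : ℕ → ℕ → ℕ,
        (∀ p : ℕ, p.Prime → ∀ k : ℕ, 1 ≤ k → φ p k < p) →
        (∀ p n : ℕ, p.Prime → 1 ≤ n → NSet p n (charSum φ p n) ∈ U) →
        (∀ p : ℕ, p.Prime → ∀ k : ℕ, 1 ≤ k → ψ p k < p) →
        (∀ p n : ℕ, p.Prime → 1 ≤ n → NSet p n (charSum ψ p n) ∈ U) →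
        ∀ p : ℕ, p.Prime → ∀ k : ℕ, 1 ≤ k → φ p k = ψ p k)) ∧
    (∀ φ : ℕ → ℕ → ℕ, (∀ p : ℕ, p.Prime → ∀ k : ℕ, 1 ≤ k → φ p k < p) →
      ∃ U : Ultrafilter ℕ+, (∀ A : Set ℕ+, A.Finite → A ∉ U) ∧
        (∀ p n : ℕ, p.Prime → 1 ≤ n → NSet p n (charSum φ p n) ∈ U)) := by
  classical
  have hNSet : ∀ (p n t : ℕ), NSet p n t = {x : ℕ+ | p ^ n ∣ (x : ℕ) + t} :=
    fun p n t => Set.ext fun x => mem_NSet_iff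
  constructor
  · intro U
    constructor
    · -- existence
      have key : ∀ p n : ℕ, p.Prime →
          ∃ t, t < p ^ n ∧ {x : ℕ+ | p ^ n ∣ (x : ℕ) + t} ∈ U := by
        intro p n hp
        exact exists_res U (pow_pos hp.pos n)
      choose T hT1 hT2 using key
      set Sd : ℕ → ℕ → ℕ := fun p n => if h : p.Prime then T p n h else 0 with hSd
      set φ : ℕ → ℕ → ℕ := fun p k => Sd p k / p ^ (k - 1) with hφdef
      have hSdp : ∀ (p n : ℕ) (hp : p.Prime), Sd p n = T p n hp := by
        intro p n hp; simp [hSd, dif_pos hp]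
      have hcompat : ∀ (p n : ℕ) (hp : p.Prime), Sd p (n + 1) % p ^ n = Sd p n := by
        intro p n hp
        rw [hSdp p n hp, hSdp p (n + 1) hp]
        have h := compat U (Nat.le_succ n) (hT2 p n hp) (hT2 p (n + 1) hp)
        have := h.symm
        unfold Nat.ModEq at this
        rw [this, Nat.mod_eq_of_lt (hT1 p n hp)]
      have hsum : ∀ (p : ℕ) (hp : p.Prime) (n : ℕ), charSum φ p n = Sd p n := by
        intro p hp n
        induction n with
        | zero =>
          have : Sd p 0 = 0 := by
            have := hT1 p 0 hp
            rw [hSdp p 0 hp]; simpa using this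
          simp [charSum, this]
        | succ n ih =>
          have hφn : φ p (n + 1) = Sd p (n + 1) / p ^ n := rfl
          rw [charSum_succ, ih, hφn, ← hcompat p n hp]
          exact Nat.mod_add_div _ _
      refine ⟨φ, ?_, ?_⟩
      · intro p hp k hk
        obtain ⟨j, rfl⟩ : ∃ j, k = j + 1 := ⟨k - 1, by omega⟩
        have hlt : Sd p (j + 1) < p ^ (j + 1) := by
          rw [hSdp p (j + 1) hp]; exact hT1 p (j + 1) hp
        have : Sd p (j + 1) / p ^ j < p := by
          apply Nat.div_lt_of_lt_mul
          calc Sd p (j + 1) < p ^ (j + 1) := hlt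
            _ = p ^ j * p := by ring
        simpa [hφdef] using this
      · intro p n hp hn
        rw [hNSet, hsum p hp n, hSdp p n hp]
        exact hT2 p n hp
    · -- uniqueness
      intro φ ψ hφ hφU hψ hψU p hp k hk
      have hsumEq : ∀ n : ℕ, charSum φ p n = charSum ψ p n := by
        intro n
        rcases Nat.eq_zero_or_pos n with rfl | hn
        · simp [charSum]
        · have h1 := hφU p n hp hn
          have h2 := hψU p n hp hn
          rw [hNSet] at h1 h2
          have h := compat U le_rfl h1 h2
          have hlt1 := charSum_lt hp.one_lt.le (hφ p hp) n
          have hlt2 := charSum_lt hp.one_lt.le (hψ p hp) n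
          unfold Nat.ModEq at h
          rwa [Nat.mod_eq_of_lt hlt1, Nat.mod_eq_of_lt hlt2] at h
      obtain ⟨j, rfl⟩ : ∃ j, k = j + 1 := ⟨k - 1, by omega⟩
      have e1 := hsumEq j
      have e2 := hsumEq (j + 1)
      rw [charSum_succ, charSum_succ, e1] at e2
      have : p ^ j * φ p (j + 1) = p ^ j * ψ p (j + 1) := by omega
      exact Nat.eq_of_mul_eq_mul_left (pow_pos hp.pos j) this
  · -- part (2)
    intro φ hφ
    have hpos : ∀ j : ℕ, ∃ x : ℕ+, j ≤ (x : ℕ) ∧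
        ∀ p : ℕ, p.Prime → p ≤ j → p ^ j ∣ (x : ℕ) + charSum φ p j := by
      intro j
      set S := (Finset.range (j + 1)).filter Nat.Prime with hSdef
      obtain ⟨x, hx⟩ := crt S (fun p hp => (Finset.mem_filter.mp hp).2) j
        (fun p => p ^ j - charSum φ p j % p ^ j)
      set P := ∏ p ∈ S, p ^ j with hPdef
      have hP : 0 < P := by
        apply Finset.prod_pos
        intro p hp
        exact pow_pos (Finset.mem_filter.mp hp).2.pos j
      refine ⟨⟨x + (j + 1) * P, by positivity⟩, ?_, ?_⟩
      · have : j + 1 ≤ (j + 1) * P := Nat.le_mul_of_pos_right _ hP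
        simp only [PNat.mk_coe]
        omega
      · intro p hp hpj
        have hpS : p ∈ S := Finset.mem_filter.mpr ⟨Finset.mem_range.mpr (by omega), hp⟩
        have hdvdP : p ^ j ∣ (j + 1) * P := Dvd.dvd.mul_left (Finset.dvd_prod_of_mem _ hpS) _
        have h1 := hx p hpS
        have hlt : charSum φ p j % p ^ j < p ^ j := Nat.mod_lt _ (pow_pos hp.pos j)
        have h2 : x + charSum φ p j ≡
            (p ^ j - charSum φ p j % p ^ j) + charSum φ p j [MOD p ^ j] := h1.add_right _
        have h3 : (p ^ j - charSum φ p j % p ^ j) + charSum φ p j ≡ 0 [MOD p ^ j] := by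
          have e : (p ^ j - charSum φ p j % p ^ j) + charSum φ p j ≡
              (p ^ j - charSum φ p j % p ^ j) + charSum φ p j % p ^ j [MOD p ^ j] :=
            Nat.ModEq.add_left _ (Nat.mod_modEq _ _).symm
          rw [show (p ^ j - charSum φ p j % p ^ j) + charSum φ p j % p ^ j = p ^ j from by
            omega] at e
          exact e.trans (Nat.modEq_zero_iff_dvd.mpr dvd_rfl)
        have h4 : p ^ j ∣ x + charSum φ p j := Nat.modEq_zero_iff_dvd.mp (h2.trans h3)
        have : (x + (j + 1) * P) + charSum φ p j = (x + charSum φ p j) + (j + 1) * P := by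
          ring
        simp only [PNat.mk_coe]
        rw [this]
        exact dvd_add h4 hdvdP
    choose b hb1 hb2 using hpos
    refine ⟨Ultrafilter.map b (Filter.hyperfilter ℕ), ?_, ?_⟩
    · intro A hA hAU
      rw [Ultrafilter.mem_map] at hAU
      have hfin : (b ⁻¹' A).Finite := by
        have himg : ((fun x : ℕ+ => (x : ℕ)) '' A).Finite := hA.image _
        obtain ⟨B, hB⟩ := himg.bddAbove
        apply Set.Finite.subset (Set.finite_Iic B)
        intro j hj
        exact Set.mem_Iic.mpr (le_trans (hb1 j) (hB (Set.mem_image_of_mem _ hj)))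
      exact Filter.notMem_hyperfilter_of_finite hfin hAU
    · intro p n hp hn
      rw [Ultrafilter.mem_map]
      have hsub : {j : ℕ | p ≤ j ∧ n ≤ j} ⊆ b ⁻¹' NSet p n (charSum φ p n) := by
        rintro j ⟨hpj, hnj⟩
        have hd := hb2 j p hp hpj
        obtain ⟨c, hc⟩ := charSum_sub (φ := φ) (p := p) hnj
        have h1 : p ^ n ∣ (b j : ℕ) + charSum φ p j := dvd_trans (pow_dvd_pow p hnj) hd
        rw [hc] at h1
        have h2 : p ^ n ∣ (b j : ℕ) + charSum φ p n := by
          have hsub' := Nat.dvd_sub h1 (dvd_mul_right (p ^ n) c)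
          have : (b j : ℕ) + (charSum φ p n + p ^ n * c) - p ^ n * c =
              (b j : ℕ) + charSum φ p n := by omega
          rwa [this] at hsub'
        exact mem_NSet_iff.mpr h2
      apply Filter.mem_of_superset _ hsub
      apply Filter.mem_hyperfilter_of_finite_compl
      apply Set.Finite.subset (Set.finite_Iio (max p n))
      intro j hj
      simp only [Set.mem_compl_iff, Set.mem_setOf_eq, not_and_or, not_le] at hj
      simp only [Set.mem_Iio]
      omega
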